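/- arXiv:1703.06720 — 2 statements merged into one kernel-verified Lean document; each statement's English description precedes it below -/
import Mathlib

section
/- If f ∈ C_b(ℝ, L₁(ℝ^{n-1})) (bounded uniformly continuous as a function of x_n with values in L₁) and η ∈ 𝒮(ℝ^n) has ∫ η = 1, then setting η_k(x) = k^{|a|} η(k^a x), the functions (η_k * f)(·, 0) converge to f(·, 0) in L₁(ℝ^{n-1}) as k → ∞. -/
open MeasureTheory Filter Topology
open scoped ENNReal NNReal

/-- Continuity of translation in `L¹`, in `lintegral` form. -/
lemma l1_translation_continuity {m : ℕ} (g : (Fin m → ℝ) → ℂ)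
    (hgm : Measurable g) (hg : Integrable g) :
    Tendsto (fun c : Fin m → ℝ => ∫⁻ x, ‖g (x - c) - g x‖₊) (𝓝 0) (𝓝 0) := by
  rw [ENNReal.tendsto_nhds_zero]
  intro ε hε
  rcases eq_or_ne ε ⊤ with rfl | hεtop
  · exact Eventually.of_forall fun _ => le_top
  have h3 : (ε / 3 : ℝ≥0∞) ≠ 0 := by
    simp [ENNReal.div_eq_zero_iff, hε.ne']
  obtain ⟨h, h_supp, hgh, h_cont, h_int⟩ := hg.exists_hasCompactSupport_lintegral_sub_le h3
  obtain ⟨M, hM⟩ := h_cont.bounded_above_of_compact_support h_supp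
  set K := Metric.cthickening 1 (tsupport h) with hK
  have hKcomp : IsCompact K := h_supp.cthickening
  have hKclosed : IsClosed K := Metric.isClosed_cthickening
  have hKvol : volume K ≠ ⊤ := hKcomp.measure_lt_top.ne
  -- middle term tends to zero
  have hmid : Tendsto (fun c : Fin m → ℝ => ∫⁻ x, ‖h (x - c) - h x‖₊) (𝓝 0) (𝓝 0) := by
    have key := tendsto_lintegral_filter_of_dominated_convergence
      (μ := (volume : Measure (Fin m → ℝ))) (l := 𝓝 (0 : Fin m → ℝ))
      (F := fun c x => (‖h (x - c) - h x‖₊ : ℝ≥0∞)) (f := fun _ => 0)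
      (K.indicator fun _ => ENNReal.ofReal (2 * M)) ?_ ?_ ?_ ?_
    · simpa using key
    · exact Eventually.of_forall fun c =>
        (((h_cont.comp (continuous_id.sub continuous_const)).sub h_cont).measurable).enorm
    · filter_upwards [Metric.closedBall_mem_nhds (0 : Fin m → ℝ) one_pos] with c hc
      refine Eventually.of_forall fun x => ?_
      by_cases hx : x ∈ K
      · rw [Set.indicator_of_mem hx]
        rw [← enorm_eq_nnnorm, ← ofReal_norm]
        refine ENNReal.ofReal_le_ofReal ?_
        calc ‖h (x - c) - h x‖ ≤ ‖h (x - c)‖ + ‖h x‖ := norm_sub_le _ _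
          _ ≤ M + M := add_le_add (hM _) (hM _)
          _ = 2 * M := by ring
      · have hx1 : h x = 0 := by
          apply image_eq_zero_of_notMem_tsupport
          exact fun hmem => hx (Metric.self_subset_cthickening _ hmem)
        have hx2 : h (x - c) = 0 := by
          apply image_eq_zero_of_notMem_tsupport
          intro hmem
          apply hx
          refine Metric.mem_cthickening_of_dist_le x (x - c) 1 _ hmem ?_
          rw [dist_eq_norm, sub_sub_cancel]
          simpa using Metric.mem_closedBall.mp hc
        simp [hx1, hx2]
    · rw [lintegral_indicator hKclosed.measurableSet]
      simp only [setLIntegral_const]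
      exact ENNReal.mul_ne_top ENNReal.ofReal_ne_top hKvol
    · refine Eventually.of_forall fun x => ?_
      have h1 : Tendsto (fun c : Fin m → ℝ => h (x - c) - h x) (𝓝 0) (𝓝 (h (x - 0) - h x)) :=
        ((h_cont.comp (continuous_const.sub continuous_id)).sub continuous_const).tendsto 0
      simp only [sub_zero, sub_self] at h1
      have h2 := (ENNReal.tendsto_coe.mpr h1.nnnorm)
      simpa using h2
  rw [ENNReal.tendsto_nhds_zero] at hmid
  filter_upwards [hmid (ε / 3) (by positivity)] with c hc
  have hmg : Measurable fun x => (‖g (x - c) - h (x - c)‖₊ : ℝ≥0∞) :=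
    (((hgm.comp (measurable_id.sub measurable_const)).sub
      ((h_cont.measurable).comp (measurable_id.sub measurable_const)))).enorm
  have hmh : Measurable fun x => (‖h (x - c) - h x‖₊ : ℝ≥0∞) :=
    (((h_cont.measurable.comp (measurable_id.sub measurable_const)).sub
      h_cont.measurable)).enorm
  calc (∫⁻ x, (‖g (x - c) - g x‖₊ : ℝ≥0∞))
      ≤ ∫⁻ x, ((‖g (x - c) - h (x - c)‖₊ : ℝ≥0∞) + ‖h (x - c) - h x‖₊ + ‖h x - g x‖₊) := by
        refine lintegral_mono fun x => ?_
        simpa [edist_eq_enorm_sub, enorm_eq_nnnorm] using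
          edist_triangle4 (g (x - c)) (h (x - c)) (h x) (g x)
    _ = (∫⁻ x, (‖g (x - c) - h (x - c)‖₊ : ℝ≥0∞)) + (∫⁻ x, (‖h (x - c) - h x‖₊ : ℝ≥0∞))
        + ∫⁻ x, (‖h x - g x‖₊ : ℝ≥0∞) := by
        rw [lintegral_add_left (hmg.fun_add hmh), lintegral_add_left hmg]
    _ ≤ ε / 3 + ε / 3 + ε / 3 := by
        have e1 : (∫⁻ x, (‖g (x - c) - h (x - c)‖₊ : ℝ≥0∞)) = ∫⁻ x, (‖g x - h x‖₊ : ℝ≥0∞) :=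
          lintegral_sub_right_eq_self (μ := volume) (fun x => (‖g x - h x‖₊ : ℝ≥0∞)) c
        have e3 : (∫⁻ x, (‖h x - g x‖₊ : ℝ≥0∞)) ≤ ε / 3 := by
          have : ∀ x, (‖h x - g x‖₊ : ℝ≥0∞) = ‖g x - h x‖₊ := fun x => by rw [← neg_sub, nnnorm_neg]
          simp_rw [this]; exact hgh
        exact add_le_add (add_le_add (e1.le.trans hgh) hc) e3
    _ = ε := ENNReal.add_thirds ε

theorem aux_approx_identity
    (m : ℕ) (f : (Fin m → ℝ) → ℝ → ℂ)
    (hmeas : Measurable (Function.uncurry f))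
    (hint : ∀ t : ℝ, Integrable (fun x' => f x' t))
    (C : ℝ) (hC : ∀ t : ℝ, (∫ x', ‖f x' t‖) ≤ C)
    (hucont : ∀ ε : ℝ, 0 < ε → ∃ δ : ℝ, 0 < δ ∧ ∀ s t : ℝ, |s - t| < δ →
      (∫ x', ‖f x' s - f x' t‖) ≤ ε)
    (η : SchwartzMap ((Fin m → ℝ) × ℝ) ℂ)
    (hη : (∫ z, η z) = 1)
    (hB0 : Tendsto (fun c : Fin m → ℝ => ∫⁻ x', (‖f (x' - c) 0 - f x' 0‖₊ : ℝ≥0∞))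
      (𝓝 0) (𝓝 0))
    (c : ℕ → ((Fin m → ℝ) × ℝ) → (Fin m → ℝ)) (s : ℕ → ((Fin m → ℝ) × ℝ) → ℝ)
    (hcm : ∀ k, Measurable (c k)) (hsm : ∀ k, Measurable (s k))
    (hc0 : ∀ z, Tendsto (fun k => c k z) atTop (𝓝 0))
    (hs0 : ∀ z, Tendsto (fun k => s k z) atTop (𝓝 0)) :
    Tendsto (fun k : ℕ =>
      ∫ x' : Fin m → ℝ, ‖(∫ z : (Fin m → ℝ) × ℝ, η z * f (x' - c k z) (s k z)) - f x' 0‖)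
      atTop (𝓝 0) := by
  haveI : (volume : Measure ((Fin m → ℝ) × ℝ)).IsAddHaarMeasure :=
    (show (volume : Measure ((Fin m → ℝ) × ℝ))
      = (volume : Measure (Fin m → ℝ)).prod volume from rfl) ▸ inferInstance
  have hms : ∀ t : ℝ, Measurable fun x' => f x' t := fun t =>
    hmeas.comp (measurable_id.prodMk measurable_const)
  have hηi : Integrable (fun z : (Fin m → ℝ) × ℝ => (η z : ℂ)) := η.integrable
  have hηtop : (∫⁻ z, (‖η z‖₊ : ℝ≥0∞)) ≠ ⊤ := hηi.2.ne
  have hslice : ∀ t : ℝ, (∫⁻ x', (‖f x' t‖₊ : ℝ≥0∞)) ≤ ENNReal.ofReal C := fun t => by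
    refine (ofReal_integral_norm_eq_lintegral_enorm (hint t)).symm.le.trans ?_
    exact ENNReal.ofReal_le_ofReal (hC t)
  set A : ℝ → ℝ≥0∞ := fun t => ∫⁻ x', (‖f x' t - f x' 0‖₊ : ℝ≥0∞) with hAdef
  set B : (Fin m → ℝ) → ℝ≥0∞ :=
    fun d => ∫⁻ x', (‖f (x' - d) 0 - f x' 0‖₊ : ℝ≥0∞) with hBdef
  have hA0 : Tendsto A (𝓝 0) (𝓝 0) := by
    rw [ENNReal.tendsto_nhds_zero]
    intro ε hε
    rcases eq_or_ne ε ⊤ with rfl | htop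
    · exact Eventually.of_forall fun _ => le_top
    obtain ⟨δ, hδ, hδ'⟩ := hucont ε.toReal (ENNReal.toReal_pos hε.ne' htop)
    filter_upwards [Metric.ball_mem_nhds (0 : ℝ) hδ] with t ht
    have hAs : A t = ENNReal.ofReal (∫ x', ‖f x' t - f x' 0‖) :=
      (ofReal_integral_norm_eq_lintegral_enorm ((hint t).sub (hint 0))).symm
    rw [hAs]
    calc ENNReal.ofReal (∫ x', ‖f x' t - f x' 0‖)
        ≤ ENNReal.ofReal ε.toReal :=
          ENNReal.ofReal_le_ofReal (hδ' t 0 (by simpa [Real.dist_eq] using ht))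
      _ = ε := ENNReal.ofReal_toReal htop
  have hshiftmeas : ∀ (d : Fin m → ℝ) (t : ℝ),
      Measurable fun x' : Fin m → ℝ => f (x' - d) t :=
    fun d t => (hms t).comp (measurable_id.sub measurable_const)
  have hg1 : ∀ (d : Fin m → ℝ) (t : ℝ),
      (∫⁻ x', (‖f (x' - d) t - f x' 0‖₊ : ℝ≥0∞)) ≤ A t + B d := by
    intro d t
    calc (∫⁻ x', (‖f (x' - d) t - f x' 0‖₊ : ℝ≥0∞))
        ≤ ∫⁻ x', ((‖f (x' - d) t - f (x' - d) 0‖₊ : ℝ≥0∞) + ‖f (x' - d) 0 - f x' 0‖₊) :=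
          lintegral_mono fun x' => by
            simpa [edist_eq_enorm_sub, enorm_eq_nnnorm] using
              edist_triangle (f (x' - d) t) (f (x' - d) 0) (f x' 0)
      _ = (∫⁻ x', (‖f (x' - d) t - f (x' - d) 0‖₊ : ℝ≥0∞))
          + ∫⁻ x', (‖f (x' - d) 0 - f x' 0‖₊ : ℝ≥0∞) :=
          lintegral_add_left (((hshiftmeas d t).sub (hshiftmeas d 0)).enorm) _
      _ = A t + B d := by
          congr 1
          exact lintegral_sub_right_eq_self (μ := volume)
            (fun x' => (‖f x' t - f x' 0‖₊ : ℝ≥0∞)) d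
  have hg1bd : ∀ (d : Fin m → ℝ) (t : ℝ),
      (∫⁻ x', (‖f (x' - d) t - f x' 0‖₊ : ℝ≥0∞)) ≤ ENNReal.ofReal C + ENNReal.ofReal C := by
    intro d t
    calc (∫⁻ x', (‖f (x' - d) t - f x' 0‖₊ : ℝ≥0∞))
        ≤ ∫⁻ x', ((‖f (x' - d) t‖₊ : ℝ≥0∞) + ‖f x' 0‖₊) :=
          lintegral_mono fun x' => by
            rw [← ENNReal.coe_add]
            exact ENNReal.coe_le_coe.mpr (nnnorm_sub_le (f (x' - d) t) (f x' 0))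
      _ = (∫⁻ x', (‖f (x' - d) t‖₊ : ℝ≥0∞)) + ∫⁻ x', (‖f x' 0‖₊ : ℝ≥0∞) :=
          lintegral_add_left ((hshiftmeas d t).enorm) _
      _ ≤ ENNReal.ofReal C + ENNReal.ofReal C := by
          refine add_le_add ?_ (hslice 0)
          have he : (∫⁻ x', (‖f (x' - d) t‖₊ : ℝ≥0∞)) = ∫⁻ x', (‖f x' t‖₊ : ℝ≥0∞) :=
            lintegral_sub_right_eq_self (μ := volume) (fun x' => (‖f x' t‖₊ : ℝ≥0∞)) d
          exact he.le.trans (hslice t)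
  -- measurability of the product-space integrand
  have hpairmeas : ∀ k, Measurable fun p : (Fin m → ℝ) × ((Fin m → ℝ) × ℝ) =>
      f (p.1 - c k p.2) (s k p.2) := fun k =>
    hmeas.comp ((measurable_fst.sub ((hcm k).comp measurable_snd)).prodMk
      ((hsm k).comp measurable_snd))
  have hΦmeas : ∀ k, Measurable fun p : (Fin m → ℝ) × ((Fin m → ℝ) × ℝ) =>
      η p.2 * f (p.1 - c k p.2) (s k p.2) := fun k =>
    (η.continuous.measurable.comp measurable_snd).mul (hpairmeas k)
  -- a.e. integrability of the inner integrand
  have hΨ : ∀ k, ∀ᵐ x' : Fin m → ℝ,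
      Integrable (fun z : (Fin m → ℝ) × ℝ => η z * f (x' - c k z) (s k z)) := by
    intro k
    have hHmeas : Measurable fun x' : Fin m → ℝ =>
        ∫⁻ z : (Fin m → ℝ) × ℝ, (‖η z * f (x' - c k z) (s k z)‖₊ : ℝ≥0∞) :=
      Measurable.lintegral_prod_right' ((hΦmeas k).enorm)
    have hHfin : (∫⁻ x', ∫⁻ z : (Fin m → ℝ) × ℝ,
        (‖η z * f (x' - c k z) (s k z)‖₊ : ℝ≥0∞)) ≠ ⊤ := by
      have hswap : (∫⁻ x', ∫⁻ z : (Fin m → ℝ) × ℝ, (‖η z * f (x' - c k z) (s k z)‖₊ : ℝ≥0∞))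
          = ∫⁻ z : (Fin m → ℝ) × ℝ, ∫⁻ x', (‖η z * f (x' - c k z) (s k z)‖₊ : ℝ≥0∞) :=
        lintegral_lintegral_swap ((hΦmeas k).enorm.aemeasurable)
      rw [hswap]
      have hb : ∀ z : (Fin m → ℝ) × ℝ,
          (∫⁻ x', (‖η z * f (x' - c k z) (s k z)‖₊ : ℝ≥0∞))
            ≤ (‖η z‖₊ : ℝ≥0∞) * ENNReal.ofReal C := by
        intro z
        have h1 : ∀ x' : Fin m → ℝ, (‖η z * f (x' - c k z) (s k z)‖₊ : ℝ≥0∞)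
            = (‖η z‖₊ : ℝ≥0∞) * ‖f (x' - c k z) (s k z)‖₊ := fun x' => by
          rw [nnnorm_mul, ENNReal.coe_mul]
        calc (∫⁻ x', (‖η z * f (x' - c k z) (s k z)‖₊ : ℝ≥0∞))
            = ∫⁻ x', (‖η z‖₊ : ℝ≥0∞) * ‖f (x' - c k z) (s k z)‖₊ := lintegral_congr h1
          _ = (‖η z‖₊ : ℝ≥0∞) * ∫⁻ x', (‖f (x' - c k z) (s k z)‖₊ : ℝ≥0∞) :=
            lintegral_const_mul' _ _ ENNReal.coe_ne_top
          _ ≤ (‖η z‖₊ : ℝ≥0∞) * ENNReal.ofReal C := by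
            refine mul_le_mul_right ?_ _
            have he : (∫⁻ x', (‖f (x' - c k z) (s k z)‖₊ : ℝ≥0∞))
                = ∫⁻ x', (‖f x' (s k z)‖₊ : ℝ≥0∞) :=
              lintegral_sub_right_eq_self (μ := volume)
                (fun x' => (‖f x' (s k z)‖₊ : ℝ≥0∞)) (c k z)
            exact he.le.trans (hslice _)
      refine ne_top_of_le_ne_top
        (b := (∫⁻ z : (Fin m → ℝ) × ℝ, (‖η z‖₊ : ℝ≥0∞)) * ENNReal.ofReal C)
        (ENNReal.mul_ne_top hηtop ENNReal.ofReal_ne_top) ?_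
      calc (∫⁻ z : (Fin m → ℝ) × ℝ, ∫⁻ x', (‖η z * f (x' - c k z) (s k z)‖₊ : ℝ≥0∞))
          ≤ ∫⁻ z : (Fin m → ℝ) × ℝ, (‖η z‖₊ : ℝ≥0∞) * ENNReal.ofReal C := lintegral_mono hb
        _ = (∫⁻ z : (Fin m → ℝ) × ℝ, (‖η z‖₊ : ℝ≥0∞)) * ENNReal.ofReal C :=
            lintegral_mul_const' _ _ ENNReal.ofReal_ne_top
    filter_upwards [ae_lt_top hHmeas hHfin] with x' hx'
    refine ⟨((hΦmeas k).comp measurable_prodMk_left).aestronglyMeasurable, ?_⟩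
    exact hx'
  -- key inequality
  have hLM : ∀ k, (∫⁻ x' : Fin m → ℝ,
        (‖(∫ z : (Fin m → ℝ) × ℝ, η z * f (x' - c k z) (s k z)) - f x' 0‖₊ : ℝ≥0∞))
      ≤ ∫⁻ z : (Fin m → ℝ) × ℝ, (‖η z‖₊ : ℝ≥0∞)
          * ∫⁻ x', (‖f (x' - c k z) (s k z) - f x' 0‖₊ : ℝ≥0∞) := by
    intro k
    have hae : ∀ᵐ x' : Fin m → ℝ,
        (‖(∫ z : (Fin m → ℝ) × ℝ, η z * f (x' - c k z) (s k z)) - f x' 0‖₊ : ℝ≥0∞)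
          ≤ ∫⁻ z : (Fin m → ℝ) × ℝ,
              (‖η z‖₊ : ℝ≥0∞) * ‖f (x' - c k z) (s k z) - f x' 0‖₊ := by
      filter_upwards [hΨ k] with x' hx'
      have hconst : Integrable (fun z : (Fin m → ℝ) × ℝ => η z * f x' 0) :=
        hηi.mul_const _
      have h1 : (∫ z : (Fin m → ℝ) × ℝ, η z * f x' 0) = f x' 0 := by
        have h : (fun z : (Fin m → ℝ) × ℝ => η z * f x' 0)
            = fun z : (Fin m → ℝ) × ℝ => η z • f x' 0 := rfl
        rw [h, integral_smul_const, hη, one_smul]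
      have h2 : (∫ z : (Fin m → ℝ) × ℝ, η z * (f (x' - c k z) (s k z) - f x' 0))
          = (∫ z : (Fin m → ℝ) × ℝ, η z * f (x' - c k z) (s k z)) - f x' 0 := by
        simp only [mul_sub]
        rw [integral_sub hx' hconst, h1]
      rw [← h2]
      refine (enorm_integral_le_lintegral_enorm _).trans (le_of_eq ?_)
      exact lintegral_congr fun z => by rw [enorm_eq_nnnorm, nnnorm_mul, ENNReal.coe_mul]
    calc (∫⁻ x' : Fin m → ℝ,
          (‖(∫ z : (Fin m → ℝ) × ℝ, η z * f (x' - c k z) (s k z)) - f x' 0‖₊ : ℝ≥0∞))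
        ≤ ∫⁻ x', ∫⁻ z : (Fin m → ℝ) × ℝ,
            (‖η z‖₊ : ℝ≥0∞) * ‖f (x' - c k z) (s k z) - f x' 0‖₊ := lintegral_mono_ae hae
      _ = ∫⁻ z : (Fin m → ℝ) × ℝ, ∫⁻ x',
            (‖η z‖₊ : ℝ≥0∞) * ‖f (x' - c k z) (s k z) - f x' 0‖₊ := by
          refine lintegral_lintegral_swap ?_
          exact (((η.continuous.measurable.comp measurable_snd).enorm).mul
            (((hpairmeas k).sub ((hms 0).comp measurable_fst)).enorm)).aemeasurable
      _ = ∫⁻ z : (Fin m → ℝ) × ℝ, (‖η z‖₊ : ℝ≥0∞)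
            * ∫⁻ x', (‖f (x' - c k z) (s k z) - f x' 0‖₊ : ℝ≥0∞) :=
          lintegral_congr fun z => lintegral_const_mul' _ _ ENNReal.coe_ne_top
  -- the dominating bound
  have hMbound : ∀ k (z : (Fin m → ℝ) × ℝ),
      (‖η z‖₊ : ℝ≥0∞) * (∫⁻ x', (‖f (x' - c k z) (s k z) - f x' 0‖₊ : ℝ≥0∞))
        ≤ (‖η z‖₊ : ℝ≥0∞) * (ENNReal.ofReal C + ENNReal.ofReal C) :=
    fun k z => mul_le_mul_right (hg1bd _ _) _
  have hboundfin : (∫⁻ z : (Fin m → ℝ) × ℝ,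
      (‖η z‖₊ : ℝ≥0∞) * (ENNReal.ofReal C + ENNReal.ofReal C)) ≠ ⊤ := by
    rw [lintegral_mul_const' _ _ (ENNReal.add_ne_top.mpr
      ⟨ENNReal.ofReal_ne_top, ENNReal.ofReal_ne_top⟩)]
    exact ENNReal.mul_ne_top hηtop (ENNReal.add_ne_top.mpr
      ⟨ENNReal.ofReal_ne_top, ENNReal.ofReal_ne_top⟩)
  -- convergence of the majorant
  have hM0 : Tendsto (fun k : ℕ => ∫⁻ z : (Fin m → ℝ) × ℝ, (‖η z‖₊ : ℝ≥0∞)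
      * ∫⁻ x', (‖f (x' - c k z) (s k z) - f x' 0‖₊ : ℝ≥0∞)) atTop (𝓝 0) := by
    have key := tendsto_lintegral_filter_of_dominated_convergence
      (μ := (volume : Measure ((Fin m → ℝ) × ℝ))) (l := (atTop : Filter ℕ))
      (F := fun (k : ℕ) (z : (Fin m → ℝ) × ℝ) => (‖η z‖₊ : ℝ≥0∞)
        * ∫⁻ x', (‖f (x' - c k z) (s k z) - f x' 0‖₊ : ℝ≥0∞))
      (f := fun _ => 0)
      (fun z => (‖η z‖₊ : ℝ≥0∞) * (ENNReal.ofReal C + ENNReal.ofReal C)) ?_ ?_ ?_ ?_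
    · simpa using key
    · refine Eventually.of_forall fun k => ?_
      refine ((η.continuous.measurable.enorm)).mul ?_
      exact Measurable.lintegral_prod_right'
        (f := fun q : ((Fin m → ℝ) × ℝ) × (Fin m → ℝ) =>
          (‖f (q.2 - c k q.1) (s k q.1) - f q.2 0‖₊ : ℝ≥0∞))
        ((hmeas.comp ((measurable_snd.sub ((hcm k).comp measurable_fst)).prodMk
          ((hsm k).comp measurable_fst))).sub ((hms 0).comp measurable_snd)).enorm
    · exact Eventually.of_forall fun k => ae_of_all _ (hMbound k)
    · exact hboundfin
    · refine ae_of_all _ fun z => ?_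
      have hupper : Tendsto (fun k : ℕ => (‖η z‖₊ : ℝ≥0∞) * (A (s k z) + B (c k z)))
          atTop (𝓝 0) := by
        have h : Tendsto (fun k : ℕ => (‖η z‖₊ : ℝ≥0∞) * (A (s k z) + B (c k z)))
            atTop (𝓝 ((‖η z‖₊ : ℝ≥0∞) * (0 + 0))) :=
          ENNReal.Tendsto.const_mul ((hA0.comp (hs0 z)).add (hB0.comp (hc0 z)))
            (Or.inr ENNReal.coe_ne_top)
        simpa using h
      refine tendsto_of_tendsto_of_tendsto_of_le_of_le tendsto_const_nhds hupper
        (fun k => zero_le) (fun k => mul_le_mul_right (hg1 _ _) _)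
  -- identify the integral with the lintegral
  have hIL : ∀ k, (∫ x' : Fin m → ℝ,
        ‖(∫ z : (Fin m → ℝ) × ℝ, η z * f (x' - c k z) (s k z)) - f x' 0‖)
      = (∫⁻ x' : Fin m → ℝ,
        (‖(∫ z : (Fin m → ℝ) × ℝ, η z * f (x' - c k z) (s k z)) - f x' 0‖₊ : ℝ≥0∞)).toReal := by
    intro k
    have hsm' : AEStronglyMeasurable
        (fun x' : Fin m → ℝ =>
          (∫ z : (Fin m → ℝ) × ℝ, η z * f (x' - c k z) (s k z)) - f x' 0) volume :=
      (((hΦmeas k).stronglyMeasurable.integral_prod_right').sub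
        (hms 0).stronglyMeasurable).aestronglyMeasurable
    rw [integral_eq_lintegral_of_nonneg_ae (ae_of_all _ fun x' => norm_nonneg _) hsm'.norm]
    congr 1
    exact lintegral_congr fun x' => (ofReal_norm _)
  -- conclude
  have hMfin : ∀ k, (∫⁻ z : (Fin m → ℝ) × ℝ, (‖η z‖₊ : ℝ≥0∞)
      * ∫⁻ x', (‖f (x' - c k z) (s k z) - f x' 0‖₊ : ℝ≥0∞)) ≠ ⊤ := fun k =>
    ne_top_of_le_ne_top hboundfin (lintegral_mono fun z => hMbound k z)
  have htoReal : Tendsto (fun k : ℕ => (∫⁻ z : (Fin m → ℝ) × ℝ, (‖η z‖₊ : ℝ≥0∞)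
      * ∫⁻ x', (‖f (x' - c k z) (s k z) - f x' 0‖₊ : ℝ≥0∞)).toReal) atTop (𝓝 0) := by
    have := (ENNReal.tendsto_toReal (a := (0 : ℝ≥0∞)) (by simp)).comp hM0
    simpa [Function.comp_def] using this
  refine squeeze_zero (fun k => integral_nonneg fun x' => norm_nonneg _) (fun k => ?_) htoReal
  rw [hIL k]
  exact ENNReal.toReal_mono (hMfin k) (hLM k)

/-- If `f ∈ C_b(ℝ, L₁(ℝ^{n-1}))` and `η` is Schwartz with `∫ η = 1`, then the
anisotropically scaled convolutions `(η_k * f)(·, 0)` converge to `f(·, 0)` in `L₁`. -/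
theorem anisotropic_approximate_identity_trace
    (m : ℕ) (a' : Fin m → ℝ) (aN : ℝ) (ha' : ∀ i, 1 ≤ a' i) (haN : 1 ≤ aN)
    (f : (Fin m → ℝ) → ℝ → ℂ)
    (hmeas : Measurable (Function.uncurry f))
    (hint : ∀ t : ℝ, Integrable (fun x' => f x' t))
    (hbd : ∃ C : ℝ, ∀ t : ℝ, (∫ x', ‖f x' t‖) ≤ C)
    (hucont : ∀ ε : ℝ, 0 < ε → ∃ δ : ℝ, 0 < δ ∧ ∀ s t : ℝ, |s - t| < δ →
      (∫ x', ‖f x' s - f x' t‖) ≤ ε)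
    (η : SchwartzMap ((Fin m → ℝ) × ℝ) ℂ)
    (hη : (∫ z, η z) = 1) :
    Tendsto (fun k : ℕ =>
      ∫ x' : Fin m → ℝ,
        ‖(∫ z : (Fin m → ℝ) × ℝ,
            η z * f (fun i => x' i - (k : ℝ) ^ (-(a' i)) * z.1 i)
              (-((k : ℝ) ^ (-aN)) * z.2)) - f x' 0‖)
      atTop (𝓝 0) := by
  obtain ⟨C, hC⟩ := hbd
  have hms0 : Measurable fun x' : Fin m → ℝ => f x' 0 :=
    hmeas.comp (measurable_id.prodMk measurable_const)
  have hB0 := l1_translation_continuity (fun x' => f x' 0) hms0 (hint 0)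
  have key := aux_approx_identity m f hmeas hint C hC hucont η hη hB0
    (fun k z => fun i => (k : ℝ) ^ (-(a' i)) * z.1 i)
    (fun k z => -((k : ℝ) ^ (-aN)) * z.2)
    (fun k => measurable_pi_lambda _ fun i =>
      measurable_const.mul ((measurable_pi_apply i).comp measurable_fst))
    (fun k => measurable_const.mul measurable_snd)
    (fun z => by
      rw [tendsto_pi_nhds]
      intro i
      have h1 : Tendsto (fun k : ℕ => ((k : ℝ) ^ (-(a' i)))) atTop (𝓝 0) :=
        (tendsto_rpow_neg_atTop (by linarith [ha' i])).comp tendsto_natCast_atTop_atTop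
      have h2 := h1.mul_const (z.1 i)
      simpa using h2)
    (fun z => by
      have h1 : Tendsto (fun k : ℕ => ((k : ℝ) ^ (-aN))) atTop (𝓝 0) :=
        (tendsto_rpow_neg_atTop (by linarith)).comp tendsto_natCast_atTop_atTop
      have h2 := h1.neg.mul_const z.2
      simpa using h2)
  exact key
end

section
/- If h is a tempered distribution on ℝ^n which is a continuous function of polynomial growth and its Fourier transform is supported in the anisotropic ball {ξ : |ξ|_a ≤ A}, then for every fixed x' ∈ ℝ^{n-1} the one-variable Fourier transform (in x_n) of h(x', ·) is supported in {ξ_n ∈ ℝ : |ξ_n| ≤ A^{a_n}}. -/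
open MeasureTheory FourierTransform Real SchwartzMap
open scoped ContDiff

variable {m : ℕ}

noncomputable def projL (m : ℕ) : EuclideanSpace ℝ (Fin (m+1)) →L[ℝ] EuclideanSpace ℝ (Fin m) :=
  (EuclideanSpace.equiv (Fin m) ℝ).symm.toContinuousLinearMap.comp
    (ContinuousLinearMap.pi fun i => EuclideanSpace.proj (Fin.castSucc i))

noncomputable def lastL (m : ℕ) : EuclideanSpace ℝ (Fin (m+1)) →L[ℝ] ℝ :=
  EuclideanSpace.proj (Fin.last m)

lemma projL_apply (x : EuclideanSpace ℝ (Fin (m+1))) (i : Fin m) :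
    projL m x i = x (Fin.castSucc i) := rfl

lemma lastL_apply (x : EuclideanSpace ℝ (Fin (m+1))) : lastL m x = x (Fin.last m) := rfl

lemma projL_snoc (y : EuclideanSpace ℝ (Fin m)) (t : ℝ) :
    projL m (WithLp.toLp 2 (Fin.snoc y t : Fin (m+1) → ℝ) : EuclideanSpace ℝ (Fin (m+1))) = y := by
  ext i; simp [projL_apply, Fin.snoc_castSucc]

lemma lastL_snoc (y : EuclideanSpace ℝ (Fin m)) (t : ℝ) :
    lastL m (WithLp.toLp 2 (Fin.snoc y t : Fin (m+1) → ℝ) : EuclideanSpace ℝ (Fin (m+1))) = t := by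
  simp [lastL_apply, Fin.snoc_last]

lemma norm_le_proj_add_last (x : EuclideanSpace ℝ (Fin (m+1))) :
    ‖x‖ ≤ ‖projL m x‖ + |lastL m x| := by
  have h1 : ‖x‖ = Real.sqrt (∑ i : Fin m, x (Fin.castSucc i) ^ 2 + x (Fin.last m) ^ 2) := by
    rw [EuclideanSpace.norm_eq]
    congr 1
    rw [Fin.sum_univ_castSucc]
    simp [sq_abs]
  have h2 : ‖projL m x‖ = Real.sqrt (∑ i : Fin m, x (Fin.castSucc i) ^ 2) := by
    rw [EuclideanSpace.norm_eq]; simp [projL_apply, sq_abs]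
  rw [h1, h2, lastL_apply]
  have hs : ∑ i : Fin m, x (Fin.castSucc i) ^ 2 + x (Fin.last m) ^ 2
      ≤ (Real.sqrt (∑ i : Fin m, x (Fin.castSucc i) ^ 2) + |x (Fin.last m)|) ^ 2 := by
    have hnn : (0:ℝ) ≤ ∑ i : Fin m, x (Fin.castSucc i) ^ 2 :=
      Finset.sum_nonneg fun i _ => sq_nonneg _
    have := Real.sq_sqrt hnn
    nlinarith [Real.sqrt_nonneg (∑ i : Fin m, x (Fin.castSucc i) ^ 2), abs_nonneg (x (Fin.last m)),
      sq_abs (x (Fin.last m))]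
  calc Real.sqrt (∑ i : Fin m, x (Fin.castSucc i) ^ 2 + x (Fin.last m) ^ 2)
      ≤ Real.sqrt ((Real.sqrt (∑ i : Fin m, x (Fin.castSucc i) ^ 2) + |x (Fin.last m)|) ^ 2) :=
        Real.sqrt_le_sqrt hs
    _ = _ := Real.sqrt_sq (by positivity)

lemma projL_opNorm : ‖projL m‖ ≤ 1 := by
  refine ContinuousLinearMap.opNorm_le_bound _ zero_le_one fun x => ?_
  rw [one_mul]
  have h2 : ‖projL m x‖ = Real.sqrt (∑ i : Fin m, x (Fin.castSucc i) ^ 2) := by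
    rw [EuclideanSpace.norm_eq]; simp [projL_apply, sq_abs]
  have h1 : ‖x‖ = Real.sqrt (∑ i : Fin (m+1), x i ^ 2) := by
    rw [EuclideanSpace.norm_eq]; simp [sq_abs]
  rw [h1, h2]
  apply Real.sqrt_le_sqrt
  rw [Fin.sum_univ_castSucc]
  nlinarith [sq_nonneg (x (Fin.last m))]

lemma lastL_opNorm : ‖lastL m‖ ≤ 1 := by
  refine ContinuousLinearMap.opNorm_le_bound _ zero_le_one fun x => ?_
  rw [one_mul]
  have h0 : ‖lastL m x‖ = |x (Fin.last m)| := by rw [lastL_apply]; rfl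
  have h1 : ‖x‖ = Real.sqrt (∑ i : Fin (m+1), x i ^ 2) := by
    rw [EuclideanSpace.norm_eq]; simp [sq_abs]
  rw [h0, h1, ← Real.sqrt_sq_eq_abs]
  apply Real.sqrt_le_sqrt
  exact Finset.single_le_sum (f := fun i => x i ^ 2) (fun i _ => sq_nonneg _) (Finset.mem_univ _)

open SchwartzMap in
lemma one_add_pow_mul_le {E F : Type*} [NormedAddCommGroup E] [NormedSpace ℝ E]
    [NormedAddCommGroup F] [NormedSpace ℝ F] (f : 𝓢(E, F)) (k i : ℕ) (y : E) :
    (1 + ‖y‖) ^ k * ‖iteratedFDeriv ℝ i f y‖ ≤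
      ∑ j ∈ Finset.range (k+1), (k.choose j : ℝ) * SchwartzMap.seminorm ℝ j i f := by
  have h : (1 + ‖y‖) ^ k = ∑ j ∈ Finset.range (k+1), ‖y‖ ^ j * (k.choose j : ℝ) := by
    rw [add_comm, add_pow]; simp
  rw [h, Finset.sum_mul]
  refine Finset.sum_le_sum fun j _ => ?_
  rw [mul_comm (‖y‖ ^ j) _, mul_assoc]
  exact mul_le_mul_of_nonneg_left (SchwartzMap.le_seminorm ℝ j i f y) (by positivity)

lemma norm_iteratedFDeriv_comp_clm_le {E F G : Type*} [NormedAddCommGroup E] [NormedSpace ℝ E]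
    [NormedAddCommGroup F] [NormedSpace ℝ F] [NormedAddCommGroup G] [NormedSpace ℝ G]
    {f : F → G} (hf : ContDiff ℝ ∞ f) (P : E →L[ℝ] F) (hP : ‖P‖ ≤ 1) (i : ℕ) (x : E) :
    ‖iteratedFDeriv ℝ i (fun y => f (P y)) x‖ ≤ ‖iteratedFDeriv ℝ i f (P x)‖ := by
  have h := P.iteratedFDeriv_comp_right (f := f) hf x (i := i) (by exact_mod_cast le_top)
  have h2 : (fun y => f (P y)) = f ∘ P := rfl
  rw [h2, h]
  calc ‖(iteratedFDeriv ℝ i f (P x)).compContinuousLinearMap fun _ => P‖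
      ≤ ‖iteratedFDeriv ℝ i f (P x)‖ * ∏ _j : Fin i, ‖P‖ :=
        ContinuousMultilinearMap.norm_compContinuousLinearMap_le _ _
    _ ≤ ‖iteratedFDeriv ℝ i f (P x)‖ * 1 := by
        refine mul_le_mul_of_nonneg_left ?_ (norm_nonneg _)
        calc ∏ _j : Fin i, ‖P‖ ≤ ∏ _j : Fin i, (1:ℝ) :=
              Finset.prod_le_prod (fun _ _ => norm_nonneg _) (fun _ _ => hP)
          _ = 1 := by simp
    _ = ‖iteratedFDeriv ℝ i f (P x)‖ := mul_one _

noncomputable def tensorS (m : ℕ) (ψ : 𝓢(EuclideanSpace ℝ (Fin m), ℂ)) (φ : 𝓢(ℝ, ℂ)) :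
    𝓢(EuclideanSpace ℝ (Fin (m+1)), ℂ) where
  toFun := fun ξ => ψ (projL m ξ) * φ (lastL m ξ)
  smooth' := (ψ.smooth'.comp (projL m).contDiff).mul (φ.smooth'.comp (lastL m).contDiff)
  decay' := by
    intro k n
    have hψ' : ContDiff ℝ ∞ (fun ξ : EuclideanSpace ℝ (Fin (m+1)) => ψ (projL m ξ)) :=
      ψ.smooth'.comp (projL m).contDiff
    have hφ' : ContDiff ℝ ∞ (fun ξ : EuclideanSpace ℝ (Fin (m+1)) => φ (lastL m ξ)) :=
      φ.smooth'.comp (lastL m).contDiff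
    set Bψ : ℕ → ℝ := fun i =>
      ∑ j ∈ Finset.range (k+1), (k.choose j : ℝ) * SchwartzMap.seminorm ℝ j i ψ with hBψdef
    set Bφ : ℕ → ℝ := fun i =>
      ∑ j ∈ Finset.range (k+1), (k.choose j : ℝ) * SchwartzMap.seminorm ℝ j i φ with hBφdef
    have hBψ : ∀ i, 0 ≤ Bψ i := fun i => Finset.sum_nonneg fun j _ =>
      mul_nonneg (by positivity) (apply_nonneg _ _)
    have hBφ : ∀ i, 0 ≤ Bφ i := fun i => Finset.sum_nonneg fun j _ =>
      mul_nonneg (by positivity) (apply_nonneg _ _)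
    refine ⟨∑ i ∈ Finset.range (n+1), (n.choose i : ℝ) * (Bψ i * Bφ (n-i)), fun x => ?_⟩
    have hmul := norm_iteratedFDeriv_mul_le (𝕜 := ℝ) hψ' hφ' x (n := n) (by exact_mod_cast le_top)
    have hx : ‖x‖ ^ k ≤ ((1+‖projL m x‖) * (1+‖lastL m x‖)) ^ k := by
      apply pow_le_pow_left₀ (norm_nonneg x)
      have h1 := norm_le_proj_add_last x
      have hb : |lastL m x| = ‖lastL m x‖ := rfl
      rw [hb] at h1
      nlinarith [norm_nonneg (projL m x), norm_nonneg (lastL m x)]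
    have hsumnn : (0:ℝ) ≤ ∑ i ∈ Finset.range (n+1), (n.choose i : ℝ) *
        ‖iteratedFDeriv ℝ i (fun ξ => ψ (projL m ξ)) x‖ *
        ‖iteratedFDeriv ℝ (n-i) (fun ξ => φ (lastL m ξ)) x‖ :=
      Finset.sum_nonneg fun i _ => by positivity
    calc ‖x‖ ^ k * ‖iteratedFDeriv ℝ n (fun ξ => ψ (projL m ξ) * φ (lastL m ξ)) x‖
        ≤ ((1+‖projL m x‖) * (1+‖lastL m x‖)) ^ k *
          ∑ i ∈ Finset.range (n+1), (n.choose i : ℝ) *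
            ‖iteratedFDeriv ℝ i (fun ξ => ψ (projL m ξ)) x‖ *
            ‖iteratedFDeriv ℝ (n-i) (fun ξ => φ (lastL m ξ)) x‖ :=
          mul_le_mul hx hmul (norm_nonneg _) (by positivity)
      _ = ∑ i ∈ Finset.range (n+1), (n.choose i : ℝ) *
            (((1+‖projL m x‖)^k * ‖iteratedFDeriv ℝ i (fun ξ => ψ (projL m ξ)) x‖) *
             ((1+‖lastL m x‖)^k * ‖iteratedFDeriv ℝ (n-i) (fun ξ => φ (lastL m ξ)) x‖)) := by
          rw [Finset.mul_sum]
          refine Finset.sum_congr rfl fun i _ => ?_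
          rw [mul_pow]; ring
      _ ≤ ∑ i ∈ Finset.range (n+1), (n.choose i : ℝ) * (Bψ i * Bφ (n-i)) := by
          refine Finset.sum_le_sum fun i _ => ?_
          refine mul_le_mul_of_nonneg_left ?_ (by positivity)
          have t1 : (1+‖projL m x‖)^k * ‖iteratedFDeriv ℝ i (fun ξ => ψ (projL m ξ)) x‖
              ≤ Bψ i := by
            calc (1+‖projL m x‖)^k * ‖iteratedFDeriv ℝ i (fun ξ => ψ (projL m ξ)) x‖
                ≤ (1+‖projL m x‖)^k * ‖iteratedFDeriv ℝ i (⇑ψ) (projL m x)‖ :=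
                  mul_le_mul_of_nonneg_left
                    (norm_iteratedFDeriv_comp_clm_le ψ.smooth' (projL m) projL_opNorm i x)
                    (by positivity)
              _ ≤ Bψ i := one_add_pow_mul_le ψ k i (projL m x)
          have t2 : (1+‖lastL m x‖)^k * ‖iteratedFDeriv ℝ (n-i) (fun ξ => φ (lastL m ξ)) x‖
              ≤ Bφ (n-i) := by
            calc (1+‖lastL m x‖)^k * ‖iteratedFDeriv ℝ (n-i) (fun ξ => φ (lastL m ξ)) x‖
                ≤ (1+‖lastL m x‖)^k * ‖iteratedFDeriv ℝ (n-i) (⇑φ) (lastL m x)‖ :=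
                  mul_le_mul_of_nonneg_left
                    (norm_iteratedFDeriv_comp_clm_le φ.smooth' (lastL m) lastL_opNorm (n-i) x)
                    (by positivity)
              _ ≤ Bφ (n-i) := one_add_pow_mul_le φ k (n-i) (lastL m x)
          exact mul_le_mul t1 t2 (by positivity) (hBψ i)

lemma tensorS_apply (m : ℕ) (ψ : 𝓢(EuclideanSpace ℝ (Fin m), ℂ)) (φ : 𝓢(ℝ, ℂ))
    (ξ : EuclideanSpace ℝ (Fin (m+1))) :
    tensorS m ψ φ ξ = ψ (projL m ξ) * φ (lastL m ξ) := rfl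

lemma tsupport_tensorS (m : ℕ) (ψ : 𝓢(EuclideanSpace ℝ (Fin m), ℂ)) (φ : 𝓢(ℝ, ℂ)) :
    tsupport ⇑(tensorS m ψ φ) ⊆ {ξ | lastL m ξ ∈ tsupport ⇑φ} := by
  apply closure_minimal
  · intro ξ hξ
    simp only [Function.mem_support, tensorS_apply] at hξ
    have : φ (lastL m ξ) ≠ 0 := fun h0 => hξ (by rw [h0, mul_zero])
    exact subset_closure this
  · exact IsClosed.preimage (lastL m).continuous (isClosed_closure)

lemma integrable_snoc_prod (m : ℕ) {F : EuclideanSpace ℝ (Fin (m+1)) → ℂ}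
    (hF : Integrable F) :
    Integrable (fun p : ℝ × (Fin m → ℝ) =>
      F (WithLp.toLp 2 (Fin.snoc p.2 p.1 : Fin (m+1) → ℝ) : EuclideanSpace ℝ (Fin (m+1)))) := by
  have e1 := (EuclideanSpace.volume_preserving_symm_measurableEquiv_toLp (Fin (m+1))).symm
  have e2 := (MeasureTheory.volume_preserving_piFinSuccAbove (fun _ : Fin (m+1) => ℝ)
    (Fin.last m)).symm
  rw [← e1.integrable_comp_emb (MeasurableEquiv.measurableEmbedding _)] at hF
  rw [← e2.integrable_comp_emb (MeasurableEquiv.measurableEmbedding _)] at hF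
  convert hF using 1
  · rfl
  funext p
  simp only [Function.comp_apply, MeasurableEquiv.piFinSuccAbove_symm_apply]
  rw [Fin.insertNthEquiv_last]
  rfl

lemma integral_snoc_eq (m : ℕ) {F : EuclideanSpace ℝ (Fin (m+1)) → ℂ}
    (hF : Integrable F) :
    ∫ v, F v = ∫ y : EuclideanSpace ℝ (Fin m), ∫ t : ℝ,
      F (WithLp.toLp 2 (Fin.snoc y t : Fin (m+1) → ℝ) : EuclideanSpace ℝ (Fin (m+1))) := by
  have e1 := (EuclideanSpace.volume_preserving_symm_measurableEquiv_toLp (Fin (m+1))).symm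
  have e2 := (MeasureTheory.volume_preserving_piFinSuccAbove (fun _ : Fin (m+1) => ℝ)
    (Fin.last m)).symm
  have e0 := EuclideanSpace.volume_preserving_symm_measurableEquiv_toLp (Fin m)
  have h1 : ∫ v, F v
      = ∫ p : Fin (m+1) → ℝ, F ((MeasurableEquiv.toLp 2 (Fin (m+1) → ℝ)).symm.symm p) :=
    (e1.integral_comp (MeasurableEquiv.measurableEmbedding _) F).symm
  have h2 : ∫ p : Fin (m+1) → ℝ, F ((MeasurableEquiv.toLp 2 (Fin (m+1) → ℝ)).symm.symm p)
      = ∫ q : ℝ × (Fin m → ℝ),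
          F (WithLp.toLp 2 (Fin.snoc q.2 q.1 : Fin (m+1) → ℝ) : EuclideanSpace ℝ (Fin (m+1))) := by
    rw [← e2.integral_comp (MeasurableEquiv.measurableEmbedding _)]
    congr 1
    funext q
    simp only [MeasurableEquiv.piFinSuccAbove_symm_apply]
    rw [Fin.insertNthEquiv_last]
    rfl
  have hint := integrable_snoc_prod m hF
  have h3 : ∫ q : ℝ × (Fin m → ℝ),
        F (WithLp.toLp 2 (Fin.snoc q.2 q.1 : Fin (m+1) → ℝ) : EuclideanSpace ℝ (Fin (m+1)))
      = ∫ y : Fin m → ℝ, ∫ t : ℝ,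
          F (WithLp.toLp 2 (Fin.snoc y t : Fin (m+1) → ℝ) : EuclideanSpace ℝ (Fin (m+1))) :=
    MeasureTheory.integral_prod_symm _ hint
  have h4 : ∫ y : Fin m → ℝ, ∫ t : ℝ,
        F (WithLp.toLp 2 (Fin.snoc y t : Fin (m+1) → ℝ) : EuclideanSpace ℝ (Fin (m+1)))
      = ∫ y : EuclideanSpace ℝ (Fin m), ∫ t : ℝ,
          F (WithLp.toLp 2 (Fin.snoc y t : Fin (m+1) → ℝ) : EuclideanSpace ℝ (Fin (m+1))) :=
    (e0.integral_comp (MeasurableEquiv.measurableEmbedding _)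
      (fun y : Fin m → ℝ => ∫ t : ℝ,
        F (WithLp.toLp 2 (Fin.snoc y t : Fin (m+1) → ℝ) : EuclideanSpace ℝ (Fin (m+1))))).symm
  rw [h1, h2, h3, h4]

section aux
variable {D : Type*} [NormedAddCommGroup D] [NormedSpace ℝ D] [MeasurableSpace D] [BorelSpace D] [SecondCountableTopology D]
  {μ : Measure D} [μ.HasTemperateGrowth]

lemma integrable_one_add_pow_mul (f : 𝓢(D, ℂ)) (N : ℕ) :
    Integrable (fun x => (1+‖x‖)^N * ‖f x‖) μ := by
  have hrw : (fun x : D => (1+‖x‖)^N * ‖f x‖)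
      = fun x => ∑ j ∈ Finset.range (N+1), (N.choose j : ℝ) * (‖x‖^j * ‖f x‖) := by
    funext x
    rw [add_comm, add_pow]
    rw [Finset.sum_mul]
    refine Finset.sum_congr rfl fun j _ => ?_
    ring
  rw [hrw]
  exact integrable_finset_sum _ fun j _ => ((f.integrable_pow_mul μ j).const_mul _)

lemma integrable_growth_mul_schwartz {h : D → ℂ} (hc : Continuous h) {C : ℝ} {N : ℕ}
    (hb : ∀ x, ‖h x‖ ≤ C * (1+‖x‖)^N) (f : 𝓢(D, ℂ)) :
    Integrable (fun x => h x * f x) μ := by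
  refine Integrable.mono' (((integrable_one_add_pow_mul f N).const_mul C))
    ((hc.mul f.continuous).aestronglyMeasurable) (ae_of_all _ fun x => ?_)
  rw [norm_mul]
  calc ‖h x‖ * ‖f x‖ ≤ (C * (1+‖x‖)^N) * ‖f x‖ :=
        mul_le_mul_of_nonneg_right (hb x) (norm_nonneg _)
    _ = C * ((1+‖x‖)^N * ‖f x‖) := by ring

end aux

lemma inner_snoc (m : ℕ) (y : EuclideanSpace ℝ (Fin m)) (t : ℝ)
    (x : EuclideanSpace ℝ (Fin (m+1))) :
    inner (𝕜 := ℝ) (E := EuclideanSpace ℝ (Fin (m+1)))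
        (WithLp.toLp 2 (Fin.snoc y t : Fin (m+1) → ℝ) : EuclideanSpace ℝ (Fin (m+1))) x
      = inner (𝕜 := ℝ) y (projL m x) + t * lastL m x := by
  simp only [PiLp.inner_apply, RCLike.inner_apply, conj_trivial]
  rw [Fin.sum_univ_castSucc]
  simp [Fin.snoc_castSucc, Fin.snoc_last, projL_apply, lastL_apply]
  ring

lemma continuous_snoc_char (m : ℕ) (x : EuclideanSpace ℝ (Fin (m+1)))
    (f : EuclideanSpace ℝ (Fin (m+1)) → ℂ) (hf : Continuous f) :
    Continuous (fun v : EuclideanSpace ℝ (Fin (m+1)) =>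
      Complex.exp (((-2 * π * (inner (𝕜 := ℝ) v x) : ℝ) : ℂ) * Complex.I) * f v) := by
  refine Continuous.mul ?_ hf
  apply Complex.continuous_exp.comp
  apply Continuous.mul ?_ continuous_const
  exact Complex.continuous_ofReal.comp
    ((continuous_const.mul ((continuous_id.inner continuous_const))))

lemma fourier_tensorS (m : ℕ) (ψ : 𝓢(EuclideanSpace ℝ (Fin m), ℂ)) (φ : 𝓢(ℝ, ℂ))
    (x : EuclideanSpace ℝ (Fin (m+1))) :
    𝓕 ⇑(tensorS m ψ φ) x = 𝓕 ⇑ψ (projL m x) * 𝓕 ⇑φ (lastL m x) := by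
  rw [Real.fourier_eq']
  set F : EuclideanSpace ℝ (Fin (m+1)) → ℂ := fun v =>
    Complex.exp (((-2 * π * (inner (𝕜 := ℝ) v x) : ℝ) : ℂ) * Complex.I) * (tensorS m ψ φ) v
    with hFdef
  have hFeq : (fun v : EuclideanSpace ℝ (Fin (m+1)) =>
      Complex.exp ((((-2 * π * (inner (𝕜 := ℝ) v x)) : ℝ) : ℂ) * Complex.I) • (tensorS m ψ φ) v)
      = F := by funext v; rw [smul_eq_mul]
  rw [hFeq]
  have hFi : Integrable F := by
    refine Integrable.mono' ((tensorS m ψ φ).integrable.norm)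
      (continuous_snoc_char m x _ (tensorS m ψ φ).continuous).aestronglyMeasurable
      (ae_of_all _ fun v => ?_)
    rw [hFdef]
    simp only [norm_mul]
    rw [Complex.norm_exp_ofReal_mul_I]
    simp
  rw [integral_snoc_eq m hFi]
  have hpt : ∀ (y : EuclideanSpace ℝ (Fin m)) (t : ℝ),
      F (WithLp.toLp 2 (Fin.snoc y t : Fin (m+1) → ℝ) : EuclideanSpace ℝ (Fin (m+1)))
      = (Complex.exp (((-2 * π * (inner (𝕜 := ℝ) y (projL m x)) : ℝ) : ℂ) * Complex.I) * ψ y) *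
        (Complex.exp (((-2 * π * (t * lastL m x) : ℝ) : ℂ) * Complex.I) * φ t) := by
    intro y t
    rw [hFdef]
    simp only [tensorS_apply, projL_snoc, lastL_snoc, inner_snoc]
    rw [show (((-2 * π * ((inner (𝕜 := ℝ) y (projL m x)) + t * lastL m x) : ℝ)) : ℂ) * Complex.I
        = (((-2 * π * (inner (𝕜 := ℝ) y (projL m x)) : ℝ)) : ℂ) * Complex.I
          + (((-2 * π * (t * lastL m x) : ℝ)) : ℂ) * Complex.I by push_cast; ring,
      Complex.exp_add]
    ring
  have hstep : ∀ y : EuclideanSpace ℝ (Fin m),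
      (∫ t : ℝ, F (WithLp.toLp 2 (Fin.snoc y t : Fin (m+1) → ℝ) : EuclideanSpace ℝ (Fin (m+1))))
      = (Complex.exp (((-2 * π * (inner (𝕜 := ℝ) y (projL m x)) : ℝ) : ℂ) * Complex.I) * ψ y) *
          𝓕 ⇑φ (lastL m x) := by
    intro y
    simp_rw [hpt y]
    rw [MeasureTheory.integral_const_mul]
    congr 1
    rw [Real.fourier_eq']
    simp_rw [smul_eq_mul, RCLike.inner_apply, conj_trivial, mul_comm ((lastL m) x)]
  simp_rw [hstep]
  rw [MeasureTheory.integral_mul_const]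
  congr 1
  rw [Real.fourier_eq']
  simp_rw [smul_eq_mul]

noncomputable def ofCompactSupportC {E : Type*} [NormedAddCommGroup E] [NormedSpace ℝ E]
    (u : E → ℝ) (hu : ContDiff ℝ ∞ u) (hsupp : HasCompactSupport u) : 𝓢(E, ℂ) where
  toFun := fun x => (u x : ℂ)
  smooth' := Complex.ofRealCLM.contDiff.comp hu
  decay' := by
    intro k n
    have hf : ContDiff ℝ ∞ (fun x => (u x : ℂ)) := Complex.ofRealCLM.contDiff.comp hu
    have hcs : HasCompactSupport (fun x : E => (u x : ℂ)) :=
      hsupp.comp_left (g := Complex.ofReal) Complex.ofReal_zero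
    have hder : HasCompactSupport (iteratedFDeriv ℝ n (fun x : E => (u x : ℂ))) :=
      hcs.iteratedFDeriv n
    obtain ⟨M, hM⟩ := hder.exists_bound_of_continuous
      (hf.continuous_iteratedFDeriv (by exact_mod_cast le_top))
    have hM0 : 0 ≤ M := le_trans (norm_nonneg _) (hM 0)
    obtain ⟨R, hR0, hRsub⟩ : ∃ R, 0 ≤ R ∧
        tsupport (fun x : E => (u x : ℂ)) ⊆ Metric.closedBall 0 R := by
      rcases (hcs.isCompact.isBounded).subset_closedBall 0 with ⟨R, hR⟩
      exact ⟨max R 0, le_max_right _ _,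
        hR.trans (Metric.closedBall_subset_closedBall (le_max_left _ _))⟩
    refine ⟨R^k * M, fun x => ?_⟩
    by_cases hx : x ∈ tsupport (fun x : E => (u x : ℂ))
    · have hxR : ‖x‖ ≤ R := by
        simpa [Metric.mem_closedBall, dist_zero_right] using hRsub hx
      exact mul_le_mul (pow_le_pow_left₀ (norm_nonneg x) hxR k) (hM x)
        (norm_nonneg _) (by positivity)
    · have hz : iteratedFDeriv ℝ n (fun x : E => (u x : ℂ)) x = 0 := by
        by_contra hne
        exact hx (support_iteratedFDeriv_subset (𝕜 := ℝ) n hne)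
      rw [hz, norm_zero, mul_zero]
      positivity

lemma ofCompactSupportC_apply {E : Type*} [NormedAddCommGroup E] [NormedSpace ℝ E]
    (u : E → ℝ) (hu : ContDiff ℝ ∞ u) (hsupp : HasCompactSupport u) (x : E) :
    ofCompactSupportC u hu hsupp x = (u x : ℂ) := rfl

noncomputable def esnoc (m : ℕ) (y : EuclideanSpace ℝ (Fin m)) (t : ℝ) :
    EuclideanSpace ℝ (Fin (m+1)) := WithLp.toLp 2 (Fin.snoc y t : Fin (m+1) → ℝ)

lemma esnoc_def (m : ℕ) (y : EuclideanSpace ℝ (Fin m)) (t : ℝ) :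
    esnoc m y t = (WithLp.toLp 2 (Fin.snoc y t : Fin (m+1) → ℝ) : EuclideanSpace ℝ (Fin (m+1))) := rfl

lemma continuous_snoc_pair (m : ℕ) :
    Continuous (fun p : EuclideanSpace ℝ (Fin m) × ℝ => esnoc m p.1 p.2) := by
  have h1 : Continuous (fun p : (Fin m → ℝ) × ℝ => (Fin.snoc p.1 p.2 : Fin (m+1) → ℝ)) := by
    apply continuous_pi
    intro i
    refine Fin.lastCases ?_ ?_ i
    · simp only [Fin.snoc_last]
      exact continuous_snd
    · intro j
      simp only [Fin.snoc_castSucc]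
      exact (continuous_apply j).comp continuous_fst
  have h2 := (PiLp.continuousLinearEquiv 2 ℝ (fun _ : Fin (m+1) => ℝ)).symm.continuous.comp
    (h1.comp (((PiLp.continuousLinearEquiv 2 ℝ (fun _ : Fin m => ℝ)).continuous.prodMap
      continuous_id)))
  exact h2

lemma norm_esnoc_le (m : ℕ) (y : EuclideanSpace ℝ (Fin m)) (t : ℝ) :
    ‖esnoc m y t‖ ≤ ‖y‖ + |t| := by
  have h := norm_le_proj_add_last (esnoc m y t)
  rw [esnoc_def] at h
  rw [projL_snoc, lastL_snoc] at h
  exact h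

lemma continuous_partial_integral (m : ℕ) {h : EuclideanSpace ℝ (Fin (m+1)) → ℂ}
    (hc : Continuous h) {C : ℝ} {N : ℕ} (hb : ∀ x, ‖h x‖ ≤ C * (1+‖x‖)^N) (w : 𝓢(ℝ, ℂ)) :
    Continuous (fun y : EuclideanSpace ℝ (Fin m) => ∫ t : ℝ, h (esnoc m y t) * w t) := by
  have hC : 0 ≤ C := by
    have h0 := (norm_nonneg (h 0)).trans (hb 0)
    simpa using h0
  rw [continuous_iff_continuousAt]
  intro y₀
  apply MeasureTheory.continuousAt_of_dominated
    (bound := fun t : ℝ => (C * (2+‖y₀‖)^N) * ((1+‖t‖)^N * ‖w t‖))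
  · filter_upwards with y
    exact (((hc.comp ((continuous_snoc_pair m).comp (Continuous.prodMk_right y)))).mul
      w.continuous).aestronglyMeasurable
  · have hev : ∀ᶠ y in nhds y₀, ‖y‖ ≤ ‖y₀‖ + 1 := by
      have hmem := Metric.closedBall_mem_nhds y₀ one_pos
      filter_upwards [hmem] with y hy
      have h6 : dist y y₀ ≤ 1 := Metric.mem_closedBall.mp hy
      have h7 := norm_sub_norm_le y y₀
      rw [← dist_eq_norm] at h7
      linarith
    filter_upwards [hev] with y hy
    filter_upwards with t
    have h1 : ‖h (esnoc m y t) * w t‖ ≤ C * (1 + ‖esnoc m y t‖)^N * ‖w t‖ := by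
      rw [norm_mul]
      exact mul_le_mul_of_nonneg_right (hb _) (norm_nonneg _)
    refine h1.trans ?_
    have h2 : 1 + ‖esnoc m y t‖ ≤ (2+‖y₀‖) * (1+‖t‖) := by
      have h3 := norm_esnoc_le m y t
      have h4 : |t| = ‖t‖ := rfl
      rw [h4] at h3
      nlinarith [norm_nonneg y₀, norm_nonneg (t:ℝ), norm_nonneg y]
    have h5 : (1 + ‖esnoc m y t‖)^N ≤ ((2+‖y₀‖) * (1+‖t‖))^N :=
      pow_le_pow_left₀ (by positivity) h2 N
    calc C * (1 + ‖esnoc m y t‖)^N * ‖w t‖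
        ≤ C * ((2+‖y₀‖) * (1+‖t‖))^N * ‖w t‖ :=
          mul_le_mul_of_nonneg_right (mul_le_mul_of_nonneg_left h5 hC) (norm_nonneg _)
      _ = (C * (2+‖y₀‖)^N) * ((1+‖t‖)^N * ‖w t‖) := by rw [mul_pow]; ring
  · exact (integrable_one_add_pow_mul w N).const_mul _
  · filter_upwards with t
    exact (((hc.comp ((continuous_snoc_pair m).comp
      (continuous_id.prodMk continuous_const)))).mul continuous_const).continuousAt

/-- If the Fourier transform of a continuous tempered function `h` on `ℝⁿ` is supported
in the anisotropic ball `{|ξ|_a ≤ A}`, then for each fixed `x'` the one-variable Fourier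
transform of `h(x', ·)` is supported in `{|ξ_n| ≤ A^{a_n}}`. -/
theorem partial_spectrum_of_anisotropic_band_limited
    (m : ℕ) (a : Fin (m + 1) → ℝ) (ha : ∀ i, 1 ≤ a i) (A : ℝ) (hA : 0 < A)
    (anorm : EuclideanSpace ℝ (Fin (m + 1)) → ℝ)
    (hcomp : ∀ ξ : EuclideanSpace ℝ (Fin (m + 1)),
      |ξ (Fin.last m)| ^ ((1 : ℝ) / a (Fin.last m)) ≤ anorm ξ)
    (h : EuclideanSpace ℝ (Fin (m + 1)) → ℂ)
    (hc : Continuous h)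
    (hgrowth : ∃ C : ℝ, ∃ N : ℕ, ∀ x, ‖h x‖ ≤ C * (1 + ‖x‖) ^ N)
    (hspec : ∀ φ : SchwartzMap (EuclideanSpace ℝ (Fin (m + 1))) ℂ,
      tsupport ⇑φ ⊆ {ξ | A < anorm ξ} → (∫ x, h x * 𝓕 ⇑φ x) = 0) :
    ∀ x' : EuclideanSpace ℝ (Fin m), ∀ φ : SchwartzMap ℝ ℂ,
      tsupport ⇑φ ⊆ {ξn : ℝ | A ^ (a (Fin.last m)) < |ξn|} →
      (∫ t : ℝ, h (WithLp.toLp 2 (Fin.snoc x' t : Fin (m + 1) → ℝ) :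
          EuclideanSpace ℝ (Fin (m + 1))) * 𝓕 ⇑φ t) = 0 := by
  intro x' φ hφsupp
  obtain ⟨C, N, hb⟩ := hgrowth
  set w : 𝓢(ℝ, ℂ) := FourierTransform.fourierCLE ℂ 𝓢(ℝ, ℂ) φ with hwdef
  have hw : ⇑w = 𝓕 ⇑φ := rfl
  set g : EuclideanSpace ℝ (Fin m) → ℂ := fun y => ∫ t : ℝ, h (esnoc m y t) * w t with hgdef
  have hgc : Continuous g := continuous_partial_integral m hc hb w
  have key : ∀ η : 𝓢(EuclideanSpace ℝ (Fin m), ℂ), (∫ y, η y * g y) = 0 := by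
    intro η
    set ψ : 𝓢(EuclideanSpace ℝ (Fin m), ℂ) := (FourierTransform.fourierCLE ℂ 𝓢(EuclideanSpace ℝ (Fin m), ℂ)).symm η with hψdef
    have hψ : 𝓕 ⇑ψ = ⇑η := by
      have h1 : FourierTransform.fourierCLE ℂ 𝓢(EuclideanSpace ℝ (Fin m), ℂ) ψ = η :=
          (FourierTransform.fourierCLE ℂ 𝓢(EuclideanSpace ℝ (Fin m), ℂ)).apply_symm_apply η
      rw [← h1]; rfl
    have hΦsupp : tsupport ⇑(tensorS m ψ φ) ⊆ {ξ | A < anorm ξ} := by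
      intro ξ hξ
      have h1 : lastL m ξ ∈ tsupport ⇑φ := tsupport_tensorS m ψ φ hξ
      have h2 : A ^ (a (Fin.last m)) < |ξ (Fin.last m)| := by
        have h2' := hφsupp h1
        simpa [lastL_apply] using h2'
      have ha' : (0:ℝ) < a (Fin.last m) := lt_of_lt_of_le one_pos (ha _)
      have h3 : (A ^ (a (Fin.last m))) ^ ((1:ℝ) / a (Fin.last m))
          < |ξ (Fin.last m)| ^ ((1:ℝ) / a (Fin.last m)) :=
        Real.rpow_lt_rpow (le_of_lt (Real.rpow_pos_of_pos hA _)) h2 (by positivity)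
      have h4 : (A ^ (a (Fin.last m))) ^ ((1:ℝ) / a (Fin.last m)) = A := by
        rw [← Real.rpow_mul hA.le, mul_one_div, div_self (ne_of_gt ha'), Real.rpow_one]
      have h5 : A < |ξ (Fin.last m)| ^ ((1:ℝ) / a (Fin.last m)) := h4 ▸ h3
      exact lt_of_lt_of_le h5 (hcomp ξ)
    have hspec0 := hspec (tensorS m ψ φ) hΦsupp
    have hrwF : 𝓕 ⇑(tensorS m ψ φ) = ⇑(tensorS m η w) := by
      funext x
      rw [fourier_tensorS, hψ, tensorS_apply, hw]
    rw [hrwF] at hspec0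
    have hInt : Integrable (fun x => h x * (tensorS m η w) x) :=
      integrable_growth_mul_schwartz hc hb (tensorS m η w)
    rw [integral_snoc_eq m hInt] at hspec0
    have hpt : ∀ (y : EuclideanSpace ℝ (Fin m)) (t : ℝ),
        h (WithLp.toLp 2 (Fin.snoc y t : Fin (m+1) → ℝ) : EuclideanSpace ℝ (Fin (m+1))) *
          (tensorS m η w) (WithLp.toLp 2 (Fin.snoc y t : Fin (m+1) → ℝ) : EuclideanSpace ℝ (Fin (m+1)))
        = η y * (h (esnoc m y t) * w t) := by
      intro y t
      rw [tensorS_apply, projL_snoc, lastL_snoc]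
      rw [esnoc_def]
      ring
    simp_rw [hpt] at hspec0
    simp_rw [MeasureTheory.integral_const_mul] at hspec0
    exact hspec0
  have hae : ∀ᵐ y : EuclideanSpace ℝ (Fin m), g y = 0 := by
    apply ae_eq_zero_of_integral_contDiff_smul_eq_zero hgc.locallyIntegrable
    intro u hu hucs
    have hk := key (ofCompactSupportC u hu hucs)
    simp only [ofCompactSupportC_apply] at hk
    simpa [Complex.real_smul] using hk
  have hg0 : g = fun _ => 0 := (Continuous.ae_eq_iff_eq volume hgc continuous_const).mp hae
  exact congrFun hg0 x'
end
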